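/- Let γ : [a,b] → X be an absolutely continuous curve into a metric space with d(γ(t),γ(s)) ≤ ∫_s^t h(r) dr for all s ≤ t, where h ∈ L¹(a,b). Then for almost every t ∈ [a,b], the metric speed |γ'|(t) = lim_{s→t} d(γ(t),γ(s))/|t−s| exists and satisfies |γ'|(t) ≤ h(t) for a.e. t. -/

import Mathlib

open MeasureTheory Set Filter Topology
open scoped ENNReal

lemma div_le_div_of_nonneg_right' {x y c : ℝ} (hxy : x ≤ y) (hc : 0 < c) : x / c ≤ y / c := by
  gcongr

/-- FTC-type inequality for a continuous monotone function: it has an a.e. derivative which is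
nonnegative, measurable, locally integrable, and whose integral is bounded by the increment. -/
lemma mono_ftc {m : ℝ → ℝ} (hm : Monotone m) (hc : Continuous m) :
    ∃ d : ℝ → ℝ, Measurable d ∧ (∀ t, 0 ≤ d t) ∧
      (∀ᵐ t, HasDerivAt m (d t) t) ∧
      ∀ s t : ℝ, s ≤ t → IntegrableOn d (Set.Ioc s t) ∧ ∫ r in Set.Ioc s t, d r ≤ m t - m s := by
  set μ := hm.stieltjesFunction.measure with hμ
  refine ⟨fun t => (μ.rnDeriv volume t).toReal, (Measure.measurable_rnDeriv _ _).ennreal_toReal,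
    fun t => ENNReal.toReal_nonneg, hm.ae_hasDerivAt, fun s t hst => ?_⟩
  have hsf : ∀ x, hm.stieltjesFunction x = m x := by
    intro x
    rw [hm.stieltjesFunction_eq]
    exact rightLim_eq_of_tendsto (h := nhdsGT_neBot x)
      ((hc.tendsto x).mono_left nhdsWithin_le_nhds)
  have hμIoc : μ (Set.Ioc s t) = ENNReal.ofReal (m t - m s) := by
    rw [hμ, StieltjesFunction.measure_Ioc, hsf, hsf]
  have hle : ∫⁻ r in Set.Ioc s t, μ.rnDeriv volume r ≤ μ (Set.Ioc s t) := by
    calc ∫⁻ r in Set.Ioc s t, μ.rnDeriv volume r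
        = volume.withDensity (μ.rnDeriv volume) (Set.Ioc s t) :=
          (withDensity_apply _ measurableSet_Ioc).symm
      _ ≤ μ (Set.Ioc s t) := Measure.withDensity_rnDeriv_le μ volume _
  have hne : ∫⁻ r in Set.Ioc s t, μ.rnDeriv volume r ≠ ⊤ := by
    rw [hμIoc] at hle
    exact (lt_of_le_of_lt hle ENNReal.ofReal_lt_top).ne
  have hint : IntegrableOn (fun t => (μ.rnDeriv volume t).toReal) (Set.Ioc s t) :=
    integrable_toReal_of_lintegral_ne_top (Measure.measurable_rnDeriv _ _).aemeasurable hne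
  refine ⟨hint, ?_⟩
  rw [integral_toReal (Measure.measurable_rnDeriv _ _).aemeasurable
    (ae_restrict_of_ae (Measure.rnDeriv_lt_top μ volume))]
  calc (∫⁻ r in Set.Ioc s t, μ.rnDeriv volume r).toReal
      ≤ (ENNReal.ofReal (m t - m s)).toReal :=
        ENNReal.toReal_mono ENNReal.ofReal_ne_top (hμIoc ▸ hle)
    _ = m t - m s := ENNReal.toReal_ofReal (sub_nonneg.2 (hm hst))

/-- increments of the primitive. -/
lemma primitive_sub {f : ℝ → ℝ} (hi : Integrable f) {p q : ℝ} (hpq : p ≤ q) :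
    (∫ r in (0:ℝ)..q, f r) - ∫ r in (0:ℝ)..p, f r = ∫ r in Set.Ioc p q, f r := by
  rw [intervalIntegral.integral_interval_sub_left hi.intervalIntegrable hi.intervalIntegrable,
    intervalIntegral.integral_of_le hpq]

/-- Lebesgue differentiation: the primitive of a nonneg integrable function has derivative equal
to the function a.e. -/
lemma primitive_ftc {f : ℝ → ℝ} (hmeas : Measurable f) (h0 : ∀ t, 0 ≤ f t)
    (hi : Integrable f) :
    ∀ᵐ t, HasDerivAt (fun u => ∫ r in (0:ℝ)..u, f r) (f t) t := by
  set F := fun u => ∫ r in (0:ℝ)..u, f r with hF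
  have hFc : Continuous F := hi.continuous_primitive 0
  have hFm : Monotone F := by
    intro p q hpq
    have h1 := primitive_sub hi hpq
    have h2 : 0 ≤ ∫ r in Set.Ioc p q, f r := integral_nonneg fun r => h0 r
    have : F q - F p = ∫ r in Set.Ioc p q, f r := h1
    linarith
  have hsf : ∀ x, hFm.stieltjesFunction x = F x := by
    intro x
    rw [hFm.stieltjesFunction_eq]
    exact rightLim_eq_of_tendsto (h := nhdsGT_neBot x)
      ((hFc.tendsto x).mono_left nhdsWithin_le_nhds)
  have key : hFm.stieltjesFunction.measure
      = volume.withDensity (fun t => ENNReal.ofReal (f t)) := by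
    refine Measure.ext_of_Ioc _ _ (fun p q hpq => ?_)
    rw [StieltjesFunction.measure_Ioc, withDensity_apply _ measurableSet_Ioc, hsf, hsf,
      show F q - F p = ∫ r in Set.Ioc p q, f r from primitive_sub hi hpq.le,
      ofReal_integral_eq_lintegral_ofReal hi.integrableOn (ae_of_all _ fun r => h0 r)]
  have h1 := hFm.ae_hasDerivAt
  rw [key] at h1
  filter_upwards [h1, Measure.rnDeriv_withDensity volume hmeas.ennreal_ofReal] with t ht h2
  rw [h2, ENNReal.toReal_ofReal (h0 t)] at ht
  exact ht

/-- If `γ : [a,b] → X` is an absolutely continuous curve with integrable bound `h`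
(`dist (γ s) (γ t) ≤ ∫_s^t h` for all `s ≤ t`), then for almost every `t ∈ [a,b]` the
metric speed `|γ'|(t) = lim_{s→t} dist (γ t) (γ s) / |t-s|` exists and is at most `h t`. -/
theorem metric_speed_exists_ae {X : Type*} [MetricSpace X]
    (a b : ℝ) (hab : a ≤ b) (γ : ℝ → X)
    (h : ℝ → ℝ) (hh : IntegrableOn h (Set.Icc a b))
    (hAC : ∀ s t : ℝ, a ≤ s → s ≤ t → t ≤ b →
      dist (γ s) (γ t) ≤ ∫ r in s..t, h r) :
    ∀ᵐ t ∂(volume.restrict (Set.Icc a b)),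
      ∃ L : ℝ, Tendsto (fun s => dist (γ t) (γ s) / |t - s|)
          (nhdsWithin t (Set.Icc a b \ {t})) (nhds L) ∧ L ≤ h t := by
  classical
  -- measurable representative of h
  have hm : AEMeasurable h (volume.restrict (Set.Icc a b)) := hh.aemeasurable
  set k : ℝ → ℝ := hm.mk h with hk
  have hkmeas : Measurable k := hm.measurable_mk
  have hkae : h =ᵐ[volume.restrict (Set.Icc a b)] k := hm.ae_eq_mk
  have hkint : IntegrableOn k (Set.Icc a b) := hh.congr hkae
  -- the projection onto [a,b]
  set π : ℝ → ℝ := fun t => max a (min t b) with hπ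
  have hπmem : ∀ t, π t ∈ Set.Icc a b :=
    fun t => ⟨le_max_left _ _, max_le hab (min_le_right _ _)⟩
  have hπid : ∀ t ∈ Set.Icc a b, π t = t := by
    intro t ht
    rw [hπ]
    simp only
    rw [min_eq_left ht.2, max_eq_right ht.1]
  have hπmono : Monotone π := fun u v huv => max_le_max le_rfl (min_le_min huv le_rfl)
  -- the nonneg measurable integrable dominating function
  set h₀ : ℝ → ℝ := (Set.Icc a b).indicator (fun r => max (k r) 0) with hh₀
  have h₀meas : Measurable h₀ := (hkmeas.max measurable_const).indicator measurableSet_Icc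
  have h₀nonneg : ∀ t, 0 ≤ h₀ t := fun t =>
    Set.indicator_nonneg (fun r _ => le_max_right _ _) t
  have h₀int : Integrable h₀ := IntegrableOn.integrable_indicator hkint.pos_part measurableSet_Icc
  -- comparison of integrals of h and h₀
  have hcomp : ∀ s t : ℝ, a ≤ s → s ≤ t → t ≤ b →
      ∫ r in s..t, h r ≤ ∫ r in s..t, h₀ r := by
    intro s t has hst htb
    rw [intervalIntegral.integral_of_le hst, intervalIntegral.integral_of_le hst]
    have hsub : Set.Ioc s t ⊆ Set.Icc a b :=
      Set.Ioc_subset_Icc_self.trans (Set.Icc_subset_Icc has htb)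
    have h1 : ∫ r in Set.Ioc s t, h r = ∫ r in Set.Ioc s t, k r :=
      integral_congr_ae (ae_restrict_of_ae_restrict_of_subset hsub hkae)
    rw [h1]
    refine setIntegral_mono_on (hkint.mono_set hsub) h₀int.integrableOn measurableSet_Ioc ?_
    intro r hr
    rw [hh₀, Set.indicator_of_mem (hsub hr)]
    exact le_max_left _ _
  -- the AC bound for the projected curve, with h₀, over arbitrary reals
  have hACπ : ∀ u v : ℝ, u ≤ v →
      dist (γ (π u)) (γ (π v)) ≤ ∫ r in Set.Ioc u v, h₀ r := by
    intro u v huv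
    have hπuv : π u ≤ π v := hπmono huv
    have h1 : dist (γ (π u)) (γ (π v)) ≤ ∫ r in (π u)..(π v), h r :=
      hAC _ _ (hπmem u).1 hπuv (hπmem v).2
    have h2 := hcomp (π u) (π v) (hπmem u).1 hπuv (hπmem v).2
    have hsub2 : Set.Ioc (π u) (π v) ∩ Set.Icc a b ⊆ Set.Ioc u v := by
      rintro r ⟨⟨hr1, hr2⟩, hr3, hr4⟩
      constructor
      · rcases le_total u b with hub | hbu
        · have : u = min u b := (min_eq_left hub).symm
          calc u ≤ max a (min u b) := this ▸ le_max_right _ _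
            _ < r := hr1
        · exfalso
          have : π u = b := by rw [hπ]; simp only; rw [min_eq_right hbu, max_eq_right hab]
          rw [this] at hr1
          exact absurd (hr1.trans_le hr4) (lt_irrefl b)
      · rcases le_total a v with hav | hva
        · calc r ≤ max a (min v b) := hr2
            _ ≤ max a v := max_le_max le_rfl (min_le_left _ _)
            _ = v := max_eq_right hav
        · exfalso
          have hπv : π v = a := by
            rw [hπ]
            exact max_eq_left ((min_le_left _ _).trans hva)
          rw [hπv] at hr2
          have : r = a := le_antisymm hr2 hr3
          rw [this] at hr1
          exact absurd hr1 (not_lt.2 (le_max_left _ _))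
    have h3 : ∫ r in (π u)..(π v), h₀ r ≤ ∫ r in Set.Ioc u v, h₀ r := by
      rw [intervalIntegral.integral_of_le hπuv, hh₀,
        setIntegral_indicator measurableSet_Icc]
      have he : Set.EqOn (fun r => max (k r) 0) h₀ (Set.Ioc (π u) (π v) ∩ Set.Icc a b) :=
        fun r hr => (Set.indicator_of_mem hr.2 (fun r => max (k r) 0)).symm
      rw [setIntegral_congr_fun (measurableSet_Ioc.inter measurableSet_Icc) he]
      exact setIntegral_mono_set h₀int.integrableOn
        (ae_restrict_of_ae (ae_of_all _ h₀nonneg)) (HasSubset.Subset.eventuallyLE hsub2)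
    linarith
  -- the primitive H of h₀
  set H : ℝ → ℝ := fun u => ∫ r in (0:ℝ)..u, h₀ r with hH
  have hHd : ∀ᵐ t, HasDerivAt H (h₀ t) t := primitive_ftc h₀meas h₀nonneg h₀int
  have hHsub : ∀ p q : ℝ, p ≤ q → H q - H p = ∫ r in Set.Ioc p q, h₀ r :=
    fun p q hpq => primitive_sub h₀int hpq
  have hHc : Continuous H := h₀int.continuous_primitive 0
  -- the distance functions to rational points
  set δ : ℚ → ℝ → ℝ := fun q t => dist (γ (π t)) (γ (π (q : ℝ))) with hδ
  have hδlip : ∀ (q : ℚ) (u v : ℝ), u ≤ v → |δ q v - δ q u| ≤ H v - H u := by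
    intro q u v huv
    rw [hHsub u v huv]
    calc |δ q v - δ q u| ≤ dist (γ (π v)) (γ (π u)) := abs_dist_sub_le _ _ _
      _ = dist (γ (π u)) (γ (π v)) := dist_comm _ _
      _ ≤ _ := hACπ u v huv
  have hδlip' : ∀ (q : ℚ) (u v : ℝ), |δ q v - δ q u| ≤ |H v - H u| := by
    intro q u v
    rcases le_total u v with huv | hvu
    · exact (hδlip q u v huv).trans (le_abs_self _)
    · rw [abs_sub_comm, abs_sub_comm (H v)]
      exact (hδlip q v u hvu).trans (le_abs_self _)
  have hδc : ∀ q : ℚ, Continuous (δ q) := by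
    intro q
    rw [Metric.continuous_iff]
    intro x ε hε
    obtain ⟨η, hη, hη'⟩ := Metric.continuous_iff.1 hHc x ε hε
    refine ⟨η, hη, fun y hy => lt_of_le_of_lt ?_ (hη' y hy)⟩
    rw [Real.dist_eq, Real.dist_eq]
    exact hδlip' q x y
  -- the monotone decompositions
  have hm₁ : ∀ q : ℚ, Monotone (fun t => H t - δ q t) := by
    intro q u v huv
    have h1 := abs_le.1 (hδlip q u v huv)
    simp only
    linarith [h1.2]
  have hm₂ : ∀ q : ℚ, Monotone (fun t => H t + δ q t) := by
    intro q u v huv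
    have h1 := abs_le.1 (hδlip q u v huv)
    simp only
    linarith [h1.1]
  choose d₁ d₁meas d₁nn d₁deriv d₁ftc using
    fun q : ℚ => mono_ftc (hm₁ q) (hHc.sub (hδc q))
  choose d₂ d₂meas d₂nn d₂deriv d₂ftc using
    fun q : ℚ => mono_ftc (hm₂ q) (hHc.add (hδc q))
  set D : ℚ → ℝ → ℝ := fun q t => h₀ t - d₁ q t with hD
  -- a.e. differentiability of each δ q, with derivative D q dominated by h₀
  have hEδ : ∀ q : ℚ, ∀ᵐ t, HasDerivAt (δ q) (D q t) t ∧ d₂ q t - h₀ t = D q t ∧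
      |D q t| ≤ h₀ t := by
    intro q
    filter_upwards [hHd, d₁deriv q, d₂deriv q] with t h1 h2 h3
    have hda : HasDerivAt (δ q) (D q t) t := by
      have h4 := h1.sub h2
      have e : δ q = (H - fun t => H t - δ q t) := by
        funext u
        simp only [Pi.sub_apply]
        ring
      rw [e]
      exact h4
    refine ⟨hda, ?_, ?_⟩
    · have h4 : HasDerivAt (δ q) (d₂ q t - h₀ t) t := by
        have h5 := h3.sub h1
        have e : δ q = ((fun t => H t + δ q t) - H) := by
          funext u
          simp only [Pi.sub_apply]
          ring
        rw [e]
        exact h5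
      exact h4.unique hda
    · have hsl : ∀ s, |slope (δ q) t s| ≤ |slope H t s| := by
        intro s
        rcases eq_or_ne s t with rfl | hst
        · simp
        · rw [slope_def_field, slope_def_field, abs_div, abs_div]
          have hpos : 0 < |s - t| := abs_pos.2 (sub_ne_zero.2 hst)
          exact div_le_div_of_nonneg_right' (hδlip' q t s) hpos
      have hT1 : Tendsto (fun s => |slope (δ q) t s|) (𝓝[≠] t) (𝓝 |D q t|) :=
        (continuous_abs.tendsto _).comp (hasDerivAt_iff_tendsto_slope.1 hda)
      have hT2 : Tendsto (fun s => |slope H t s|) (𝓝[≠] t) (𝓝 |h₀ t|) :=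
        (continuous_abs.tendsto _).comp (hasDerivAt_iff_tendsto_slope.1 h1)
      have h6 := le_of_tendsto_of_tendsto' hT1 hT2 hsl
      rwa [abs_of_nonneg (h₀nonneg t)] at h6
  have hE : ∀ᵐ t, HasDerivAt H (h₀ t) t ∧ ∀ q : ℚ, HasDerivAt (δ q) (D q t) t ∧
      d₂ q t - h₀ t = D q t ∧ |D q t| ≤ h₀ t := by
    filter_upwards [hHd, ae_all_iff.2 hEδ] with t h1 h2 using ⟨h1, h2⟩
  -- the candidate metric speed g
  set g' : ℝ → ℝ≥0∞ := fun t => ⨆ q : ℚ, ENNReal.ofReal |D q t| with hg'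
  have hg'meas : Measurable g' :=
    Measurable.iSup fun q => ((h₀meas.sub (d₁meas q)).abs).ennreal_ofReal
  set g : ℝ → ℝ := fun t => (g' t).toReal with hg
  have hgmeas : Measurable g := hg'meas.ennreal_toReal
  have hgnn : ∀ t, 0 ≤ g t := fun t => ENNReal.toReal_nonneg
  -- at good points, g' is finite, g ≤ h₀ and |D q| ≤ g
  have hgood : ∀ᵐ t, HasDerivAt H (h₀ t) t ∧
      (∀ q : ℚ, HasDerivAt (δ q) (D q t) t ∧ d₂ q t - h₀ t = D q t ∧ |D q t| ≤ h₀ t) ∧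
      g t ≤ h₀ t ∧ ∀ q : ℚ, |D q t| ≤ g t := by
    filter_upwards [hE] with t ht
    have hfin : g' t ≤ ENNReal.ofReal (h₀ t) :=
      iSup_le fun q => ENNReal.ofReal_le_ofReal (ht.2 q).2.2
    have hnetop : g' t ≠ ⊤ := (hfin.trans_lt ENNReal.ofReal_lt_top).ne
    refine ⟨ht.1, ht.2, ENNReal.toReal_le_of_le_ofReal (h₀nonneg t) hfin, fun q => ?_⟩
    have h1 : ENNReal.ofReal |D q t| ≤ g' t := le_iSup (fun q => ENNReal.ofReal |D q t|) q
    have h2 := ENNReal.toReal_mono hnetop h1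
    rwa [ENNReal.toReal_ofReal (abs_nonneg _)] at h2
  have hgint : Integrable g := by
    refine h₀int.mono' hgmeas.aestronglyMeasurable ?_
    filter_upwards [hgood] with t ht
    rw [Real.norm_eq_abs, abs_of_nonneg (hgnn t)]
    exact ht.2.2.1
  -- upper key estimate : dist between projected points is controlled by the integral of g
  have hup : ∀ u v : ℝ, u ≤ v →
      dist (γ (π u)) (γ (π v)) ≤ ∫ r in Set.Ioc u v, g r := by
    intro u v huv
    refine le_of_forall_pos_le_add fun ε hε => ?_
    -- choose a rational q with δ q v < ε/2
    obtain ⟨η, hη, hη'⟩ := Metric.continuous_iff.1 hHc v (ε / 2) (half_pos hε)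
    obtain ⟨q, hq1, hq2⟩ := exists_rat_btwn (lt_add_of_pos_right v hη)
    have hδqv : δ q v < ε / 2 := by
      have h1 : dist (γ (π v)) (γ (π (q : ℝ))) ≤ H (q : ℝ) - H v := by
        rw [hHsub v q hq1.le]
        exact hACπ v q hq1.le
      have h2 : dist (H (q : ℝ)) (H v) < ε / 2 := hη' _ (by
        rw [Real.dist_eq, abs_of_pos (sub_pos.2 hq1)]
        linarith)
      rw [Real.dist_eq] at h2
      calc δ q v ≤ H (q : ℝ) - H v := h1
        _ ≤ |H (q : ℝ) - H v| := le_abs_self _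
        _ < ε / 2 := h2
    -- the key inequality  δ q u - δ q v ≤ ∫ g
    have hkey : δ q u - δ q v ≤ ∫ r in Set.Ioc u v, g r := by
      have h1 := (d₂ftc q u v huv).2
      have h2 : δ q u - δ q v = (H v - H u) - ((H v + δ q v) - (H u + δ q u)) := by ring
      have h3 : (H v + δ q v) - (H u + δ q u) ≥ ∫ r in Set.Ioc u v, d₂ q r := h1
      have h4 : (∫ r in Set.Ioc u v, h₀ r) - ∫ r in Set.Ioc u v, d₂ q r
          = ∫ r in Set.Ioc u v, (h₀ r - d₂ q r) :=
        (integral_sub h₀int.integrableOn (d₂ftc q u v huv).1).symm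
      have h5 : ∫ r in Set.Ioc u v, (h₀ r - d₂ q r) ≤ ∫ r in Set.Ioc u v, g r := by
        refine setIntegral_mono_ae ((h₀int.integrableOn).sub (d₂ftc q u v huv).1)
          hgint.integrableOn ?_
        filter_upwards [hgood] with t ht
        have h6 := (ht.2.1 q).2.1
        have h7 := ht.2.2.2 q
        have : h₀ t - d₂ q t = -(D q t) := by rw [← h6]; ring
        rw [this]
        exact (neg_le_abs _).trans h7
      rw [hHsub u v huv] at h2
      linarith
    calc dist (γ (π u)) (γ (π v))
        ≤ dist (γ (π u)) (γ (π (q : ℝ))) + dist (γ (π (q : ℝ))) (γ (π v)) := dist_triangle _ _ _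
      _ = δ q u + δ q v := by rw [hδ]; simp only; rw [dist_comm (γ (π (q : ℝ)))]
      _ = (δ q u - δ q v) + 2 * δ q v := by ring
      _ ≤ (∫ r in Set.Ioc u v, g r) + 2 * (ε / 2) := by
          have := hδqv.le
          have h8 : (0:ℝ) ≤ δ q v := dist_nonneg
          gcongr
      _ = (∫ r in Set.Ioc u v, g r) + ε := by ring
  -- the primitive of g
  set G : ℝ → ℝ := fun u => ∫ r in (0:ℝ)..u, g r with hG
  have hGd : ∀ᵐ t, HasDerivAt G (g t) t := primitive_ftc hgmeas hgnn hgint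
  have hGsub : ∀ p q : ℝ, p ≤ q → G q - G p = ∫ r in Set.Ioc p q, g r :=
    fun p q hpq => primitive_sub hgint hpq
  -- V : primitive of the negative part, used to show h ≥ 0 a.e.
  set v₀ : ℝ → ℝ := (Set.Icc a b).indicator (fun r => max (-k r) 0) with hv₀
  have v₀meas : Measurable v₀ := (hkmeas.neg.max measurable_const).indicator measurableSet_Icc
  have v₀nn : ∀ t, 0 ≤ v₀ t := fun t =>
    Set.indicator_nonneg (fun r _ => le_max_right _ _) t
  have v₀int : Integrable v₀ := IntegrableOn.integrable_indicator hkint.neg.pos_part measurableSet_Icc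
  set V : ℝ → ℝ := fun u => ∫ r in (0:ℝ)..u, v₀ r with hV
  have hVd : ∀ᵐ t, HasDerivAt V (v₀ t) t := primitive_ftc v₀meas v₀nn v₀int
  have hVsub : ∀ p q : ℝ, p ≤ q → V q - V p = ∫ r in Set.Ioc p q, v₀ r :=
    fun p q hpq => primitive_sub v₀int hpq
  have hHVk : ∀ p q : ℝ, a ≤ p → p ≤ q → q ≤ b →
      (H q - H p) - (V q - V p) = ∫ r in p..q, h r := by
    intro p q hap hpq hqb
    have hsub : Set.Ioc p q ⊆ Set.Icc a b :=
      Set.Ioc_subset_Icc_self.trans (Set.Icc_subset_Icc hap hqb)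
    rw [hHsub p q hpq, hVsub p q hpq,
      ← integral_sub h₀int.integrableOn v₀int.integrableOn]
    have he : Set.EqOn (fun r => h₀ r - v₀ r) k (Set.Ioc p q) := by
      intro r hr
      simp only
      rw [hh₀, hv₀, Set.indicator_of_mem (hsub hr), Set.indicator_of_mem (hsub hr),
        max_zero_sub_max_neg_zero_eq_self]
    rw [setIntegral_congr_fun measurableSet_Ioc he,
      ← integral_congr_ae (ae_restrict_of_ae_restrict_of_subset hsub hkae),
      intervalIntegral.integral_of_le hpq]
  -- a.e. points of Icc are in Ioo
  have hne : ∀ c : ℝ, ∀ᵐ x : ℝ ∂volume, x ≠ c := by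
    intro c
    rw [ae_iff]
    simp
  have hIoo : ∀ᵐ t ∂(volume.restrict (Set.Icc a b)), t ∈ Set.Ioo a b := by
    filter_upwards [ae_restrict_mem measurableSet_Icc, ae_restrict_of_ae (hne a),
      ae_restrict_of_ae (hne b)] with t h1 h2 h3
    exact ⟨lt_of_le_of_ne h1.1 (Ne.symm h2), lt_of_le_of_ne h1.2 h3⟩
  -- h is a.e. nonnegative on Icc a b
  have hnn : ∀ᵐ t ∂(volume.restrict (Set.Icc a b)), 0 ≤ h t ∧ h t = k t := by
    filter_upwards [ae_restrict_of_ae hHd, ae_restrict_of_ae hVd,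
      ae_restrict_mem measurableSet_Icc, ae_restrict_of_ae (hne b), hkae]
      with t hHt hVt htI htb hkt
    refine ⟨?_, hkt⟩
    have htlt : t < b := lt_of_le_of_ne htI.2 htb
    have hFne : (𝓝[Set.Ioc t b] t).NeBot := by
      refine mem_closure_iff_nhdsWithin_neBot.1 ?_
      rw [closure_Ioc (ne_of_lt htlt)]
      exact Set.left_mem_Icc.2 htlt.le
    have hle' : 𝓝[Set.Ioc t b] t ≤ 𝓝[≠] t :=
      nhdsWithin_mono _ (fun s hs => ne_of_gt hs.1)
    have hT : Tendsto (fun s => slope H t s - slope V t s) (𝓝[Set.Ioc t b] t)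
        (𝓝 (h₀ t - v₀ t)) :=
      ((hasDerivAt_iff_tendsto_slope.1 hHt).sub
        (hasDerivAt_iff_tendsto_slope.1 hVt)).mono_left hle'
    have h0le : 0 ≤ h₀ t - v₀ t := by
      refine ge_of_tendsto hT ?_
      filter_upwards [self_mem_nhdsWithin] with s hs
      rw [slope_def_field, slope_def_field, div_sub_div_same]
      refine div_nonneg ?_ (sub_nonneg.2 hs.1.le)
      rw [hHVk t s htI.1 hs.1.le hs.2]
      exact dist_nonneg.trans (hAC t s htI.1 hs.1.le hs.2)
    have heq : h₀ t - v₀ t = k t := by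
      rw [hh₀, hv₀, Set.indicator_of_mem htI, Set.indicator_of_mem htI,
        max_zero_sub_max_neg_zero_eq_self]
    rw [hkt]
    rw [heq] at h0le
    exact h0le
  -- final assembly
  filter_upwards [hIoo, ae_restrict_of_ae hgood, ae_restrict_of_ae hGd, hnn]
    with t htIoo ht hGt hnnt
  refine ⟨g t, ?_, ?_⟩
  swap
  · -- g t ≤ h t
    have h1 : h₀ t = h t := by
      rw [hh₀, Set.indicator_of_mem (Set.mem_Icc_of_Ioo htIoo), ← hnnt.2,
        max_eq_left hnnt.1]
    rw [← h1]
    exact ht.2.2.1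
  · -- the limit
    have htI : t ∈ Set.Icc a b := Set.mem_Icc_of_Ioo htIoo
    have hFne : (𝓝[Set.Icc a b \ {t}] t).NeBot := by
      have hsub : Set.Ioc t b ⊆ Set.Icc a b \ {t} := by
        intro r hr
        refine ⟨⟨htIoo.1.le.trans hr.1.le, hr.2⟩, ?_⟩
        simp only [Set.mem_singleton_iff]
        exact hr.1.ne'
      have hmem : t ∈ closure (Set.Ioc t b) := by
        rw [closure_Ioc (ne_of_lt htIoo.2)]
        exact Set.left_mem_Icc.2 htIoo.2.le
      exact mem_closure_iff_nhdsWithin_neBot.1 (closure_mono hsub hmem)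
    have hFle : 𝓝[Set.Icc a b \ {t}] t ≤ 𝓝[≠] t :=
      nhdsWithin_mono _ (fun s hs => hs.2)
    rw [Metric.tendsto_nhds]
    intro ε hε
    -- upper control
    have hTup : Tendsto (fun s => |slope G t s|) (𝓝[Set.Icc a b \ {t}] t) (𝓝 (g t)) := by
      have h1 : Tendsto (fun s => |slope G t s|) (𝓝[≠] t) (𝓝 |g t|) :=
        (continuous_abs.tendsto _).comp (hasDerivAt_iff_tendsto_slope.1 hGt)
      rw [abs_of_nonneg (hgnn t)] at h1
      exact h1.mono_left hFle
    -- choose a rational witness close to the sup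
    obtain ⟨q, hq⟩ : ∃ q : ℚ, g t - ε / 2 < |D q t| := by
      rcases lt_or_ge (g t - ε / 2) 0 with hneg | hpos
      · exact ⟨0, hneg.trans_le (abs_nonneg _)⟩
      · have hgtpos : 0 < g t := lt_of_lt_of_le (half_pos hε) (by linarith)
        have hfin : g' t ≤ ENNReal.ofReal (h₀ t) :=
          iSup_le fun q => ENNReal.ofReal_le_ofReal ((ht.2.1 q)).2.2
        have hnetop : g' t ≠ ⊤ := (hfin.trans_lt ENNReal.ofReal_lt_top).ne
        have h1 : ENNReal.ofReal (g t - ε / 2) < g' t := by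
          have h2 : ENNReal.ofReal (g t - ε / 2) < ENNReal.ofReal (g t) := by
            rw [ENNReal.ofReal_lt_ofReal_iff hgtpos]
            linarith
          rwa [hg, ENNReal.ofReal_toReal hnetop] at h2
        obtain ⟨q, hq⟩ := lt_iSup_iff.1 h1
        exact ⟨q, (ENNReal.ofReal_lt_ofReal_iff_of_nonneg hpos).1 hq⟩
    have hTlow : Tendsto (fun s => |slope (δ q) t s|) (𝓝[Set.Icc a b \ {t}] t)
        (𝓝 |D q t|) :=
      ((continuous_abs.tendsto _).comp
        (hasDerivAt_iff_tendsto_slope.1 (ht.2.1 q).1)).mono_left hFle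
    -- pointwise comparisons
    have hup_pt : ∀ s ∈ Set.Icc a b \ {t}, dist (γ t) (γ s) / |t - s| ≤ |slope G t s| := by
      intro s hs
      have hsne : s ≠ t := hs.2
      have hpos : 0 < |t - s| := abs_pos.2 (sub_ne_zero.2 (Ne.symm hsne))
      rw [slope_def_field, abs_div, abs_sub_comm t s]
      have hds : dist (γ t) (γ s) = dist (γ (π t)) (γ (π s)) := by
        rw [hπid t htI, hπid s hs.1]
      rcases le_total s t with hst | hts
      · have h1 : dist (γ (π s)) (γ (π t)) ≤ ∫ r in Set.Ioc s t, g r := hup s t hst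
        rw [hds, dist_comm (γ (π t))]
        rw [← hGsub s t hst] at h1
        have h2 : G t - G s ≤ |G s - G t| := by
          rw [abs_sub_comm]; exact le_abs_self _
        exact div_le_div_of_nonneg_right' (h1.trans h2) (abs_pos.2 (sub_ne_zero.2 hsne))
      · have h1 : dist (γ (π t)) (γ (π s)) ≤ ∫ r in Set.Ioc t s, g r := hup t s hts
        rw [hds]
        rw [← hGsub t s hts] at h1
        exact div_le_div_of_nonneg_right' (h1.trans (le_abs_self _)) (abs_pos.2 (sub_ne_zero.2 hsne))
    have hlow_pt : ∀ s ∈ Set.Icc a b \ {t},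
        |slope (δ q) t s| ≤ dist (γ t) (γ s) / |t - s| := by
      intro s hs
      have hsne : s ≠ t := hs.2
      have hpos : 0 < |t - s| := abs_pos.2 (sub_ne_zero.2 (Ne.symm hsne))
      rw [slope_def_field, abs_div, abs_sub_comm s t]
      have h1 : |δ q s - δ q t| ≤ dist (γ t) (γ s) := by
        calc |δ q s - δ q t| ≤ dist (γ (π s)) (γ (π t)) := abs_dist_sub_le _ _ _
          _ = dist (γ t) (γ s) := by rw [hπid t htI, hπid s hs.1, dist_comm]
      exact div_le_div_of_nonneg_right' h1 hpos
    filter_upwards [hTup.eventually (gt_mem_nhds (lt_add_of_pos_right (g t) (half_pos hε))),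
      hTlow.eventually (lt_mem_nhds hq), self_mem_nhdsWithin] with s h1 h2 hs
    rw [Real.dist_eq, abs_sub_lt_iff]
    have h3 := hup_pt s hs
    have h4 := hlow_pt s hs
    constructor <;> linarith
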